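/- If a finite tree T with p ≥ 2 vertices, q = p − 1 edges and bipartition (X, Y) admits a set-ordered graceful labelling with respect to (X, Y), then T admits a set-ordered odd-graceful labelling with respect to (X, Y). -/
import Mathlib

/-- The induced edge label `|f u - f v|` for a vertex labelling `f`. -/
def elabel {V : Type*} (f : V → ℕ) (u v : V) : ℕ :=
  max (f u) (f v) - min (f u) (f v)

/-- `(X, Y)` is a bipartition of the graph `G`: the two parts cover all vertices,
are disjoint, and every edge joins a vertex of `X` to a vertex of `Y`. -/
def IsBipartitionOf {V : Type*} (G : SimpleGraph V) (X Y : Finset V) : Prop :=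
  (∀ v : V, v ∈ X ∨ v ∈ Y) ∧ (∀ v : V, ¬(v ∈ X ∧ v ∈ Y)) ∧
    ∀ ⦃u v : V⦄, G.Adj u v → (u ∈ X ∧ v ∈ Y) ∨ (u ∈ Y ∧ v ∈ X)

/-- `f` is a set-ordered graceful labelling of `G` (with `q` edges) with respect to the
bipartition `(X, Y)`: `f` is injective into `{0,…,q}`, the induced edge labels
`|f u - f v|` are pairwise distinct and form exactly `{1,…,q}`, and every label on `X`
is smaller than every label on `Y`. -/
def IsSetOrderedGraceful {V : Type*} (G : SimpleGraph V) (X Y : Finset V) (q : ℕ)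
    (f : V → ℕ) : Prop :=
  Function.Injective f ∧ (∀ v : V, f v ≤ q) ∧
    (∀ u v u' v' : V, G.Adj u v → G.Adj u' v' →
      elabel f u v = elabel f u' v' → s(u, v) = s(u', v')) ∧
    (∀ u v : V, G.Adj u v → 1 ≤ elabel f u v ∧ elabel f u v ≤ q) ∧
    (∀ m : ℕ, 1 ≤ m → m ≤ q → ∃ u v : V, G.Adj u v ∧ elabel f u v = m) ∧
    (∀ x ∈ X, ∀ y ∈ Y, f x < f y)

/-- `f` is a set-ordered odd-graceful labelling of `G` (with `q` edges) with respect to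
the bipartition `(X, Y)`: `f` is injective into `{0,…,2q-1}`, the induced edge labels
`|f u - f v|` are pairwise distinct and form exactly the odd numbers `{1,3,…,2q-1}`,
and every label on `X` is smaller than every label on `Y`. -/
def IsSetOrderedOddGraceful {V : Type*} (G : SimpleGraph V) (X Y : Finset V) (q : ℕ)
    (f : V → ℕ) : Prop :=
  Function.Injective f ∧ (∀ v : V, f v ≤ 2 * q - 1) ∧
    (∀ u v u' v' : V, G.Adj u v → G.Adj u' v' →
      elabel f u v = elabel f u' v' → s(u, v) = s(u', v')) ∧
    (∀ u v : V, G.Adj u v → Odd (elabel f u v) ∧ elabel f u v ≤ 2 * q - 1) ∧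
    (∀ m : ℕ, Odd m → m ≤ 2 * q - 1 → ∃ u v : V, G.Adj u v ∧ elabel f u v = m) ∧
    (∀ x ∈ X, ∀ y ∈ Y, f x < f y)

/-- A finite tree with `p ≥ 2` vertices and `q = p - 1` edges admitting a set-ordered
graceful labelling with respect to a bipartition `(X, Y)` admits a set-ordered
odd-graceful labelling with respect to `(X, Y)`. -/
theorem setOrderedGraceful_to_setOrderedOddGraceful {V : Type*} [Fintype V] [DecidableEq V]
    (G : SimpleGraph V) (hT : G.IsTree)
    (p : ℕ) (hp : Fintype.card V = p) (hp2 : 2 ≤ p)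
    (X Y : Finset V) (hbip : IsBipartitionOf G X Y)
    (f : V → ℕ) (hf : IsSetOrderedGraceful G X Y (p - 1) f) :
    ∃ g : V → ℕ, IsSetOrderedOddGraceful G X Y (p - 1) g := by
  classical
  set q := p - 1 with hqdef
  have hq1 : 1 ≤ q := by omega
  obtain ⟨hinj, hbd, hdist, hrange, hsurj, hord⟩ := hf
  obtain ⟨cover, disj, hedge⟩ := hbip
  obtain ⟨u₀, v₀, hadj₀, -⟩ := hsurj 1 le_rfl hq1
  have hab : ∃ a ∈ X, ∃ b ∈ Y, True := by
    rcases hedge hadj₀ with ⟨h1, h2⟩ | ⟨h1, h2⟩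
    · exact ⟨u₀, h1, v₀, h2, trivial⟩
    · exact ⟨v₀, h2, u₀, h1, trivial⟩
  obtain ⟨a, haX, b, hbY, -⟩ := hab
  have hYpos : ∀ y ∈ Y, 1 ≤ f y := fun y hy => by
    have := hord a haX y hy; omega
  have hXlt : ∀ x ∈ X, f x < q := fun x hx => by
    have h1 := hord x hx b hbY; have h2 := hbd b; omega
  set g : V → ℕ := fun v => if v ∈ X then 2 * f v else 2 * f v - 1 with hg
  have hgX : ∀ x ∈ X, g x = 2 * f x := fun x hx => by simp [hg, hx]
  have hgY : ∀ y ∈ Y, g y = 2 * f y - 1 := fun y hy => by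
    have := disj y; simp only [hg]; rw [if_neg (by tauto)]
  -- edge label relation
  have hkey : ∀ u v : V, G.Adj u v → elabel g u v = 2 * elabel f u v - 1 := by
    intro u v huv
    rcases hedge huv with ⟨hu, hv⟩ | ⟨hu, hv⟩
    · have h1 := hord u hu v hv
      have h2 := hgX u hu; have h3 := hgY v hv
      have h4 := hYpos v hv
      simp only [elabel]; omega
    · have h1 := hord v hv u hu
      have h2 := hgY u hu; have h3 := hgX v hv
      have h4 := hYpos u hu
      simp only [elabel]; omega
  refine ⟨g, ?_, ?_, ?_, ?_, ?_, ?_⟩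
  · intro u v huv
    rcases cover u with hu | hu <;> rcases cover v with hv | hv
    · have := hgX u hu; have := hgX v hv
      exact hinj (by omega)
    · have := hgX u hu; have := hgY v hv; have := hYpos v hv; omega
    · have := hgY u hu; have := hgX v hv; have := hYpos u hu; omega
    · have h1 := hgY u hu; have h2 := hgY v hv
      have := hYpos u hu; have := hYpos v hv
      exact hinj (by omega)
  · intro v
    rcases cover v with hv | hv
    · have := hgX v hv; have := hXlt v hv; omega
    · have := hgY v hv; have := hbd v; omega
  · intro u v u' v' h h' heq
    rw [hkey u v h, hkey u' v' h'] at heq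
    have r1 := hrange u v h; have r2 := hrange u' v' h'
    exact hdist u v u' v' h h' (by omega)
  · intro u v h
    rw [hkey u v h]
    have r := hrange u v h
    constructor
    · exact ⟨elabel f u v - 1, by omega⟩
    · omega
  · intro m hm hmle
    obtain ⟨k, hk⟩ := hm
    obtain ⟨u, v, huv, he⟩ := hsurj (k + 1) (by omega) (by omega)
    exact ⟨u, v, huv, by rw [hkey u v huv, he]; omega⟩
  · intro x hx y hy
    have := hgX x hx; have := hgY y hy
    have := hord x hx y hy; have := hYpos y hy
    omega
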